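/- Let U : A ⥤ C be a functor that creates all limits and admits a pointwise codensity monad (i.e., the right Kan extension of U along U exists and is pointwise, computed by limits over comma categories c ↓ U). Then U has a left adjoint. -/

import Mathlib

open CategoryTheory

universe v u

open CategoryTheory.Limits in
/-- If `U : A ⥤ C` creates all limits and admits a pointwise codensity monad (the right Kan
extension of `U` along `U` exists pointwise, computed by limits over the comma categories
`c ↓ U`), then `U` has a left adjoint. -/
theorem stmt5 {A : Type u} [Category.{v} A] {C : Type u} [Category.{v} C]
    (U : A ⥤ C) [CreatesLimitsOfSize.{v, max u v} U]
    [Functor.HasPointwiseRightKanExtension U U] :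
    U.IsRightAdjoint := by
  have hinit : ∀ c : C, HasInitial (StructuredArrow c U) := by
    intro c
    set F := StructuredArrow.proj c U with hF
    haveI : HasLimit (F ⋙ U) :=
      (inferInstance : Functor.HasPointwiseRightKanExtensionAt U U c)
    haveI : HasLimit F := hasLimit_of_created F U
    haveI : PreservesLimit F U := preservesLimit_of_createsLimit_and_hasLimit F U
    have tU : IsLimit (U.mapCone (limit.cone F)) := isLimitOfPreserves U (limit.isLimit F)
    let s : Cone (F ⋙ U) :=
      { pt := c
        π := { app := fun j => j.hom
               naturality := fun j j' g => by exact (Category.id_comp _).trans (StructuredArrow.w g).symm } }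
    let η : c ⟶ U.obj (limit F) := tU.lift s
    have hfac : ∀ j : StructuredArrow c U, η ≫ U.map (limit.π F j) = j.hom := fun j =>
      tU.fac s j
    let X : StructuredArrow c U := StructuredArrow.mk η
    let toJ : ∀ j : StructuredArrow c U, X ⟶ j := fun j =>
      StructuredArrow.homMk (limit.π F j) (hfac j)
    have hX : limit.π F X = 𝟙 (limit F) := by
      apply limit.hom_ext
      intro j
      have := limit.w F (toJ j)
      simp only [Category.id_comp]
      exact this
    have huniq : ∀ (j : StructuredArrow c U) (m : X ⟶ j), m = toJ j := by
      intro j m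
      ext
      have := limit.w F m
      rw [hX] at this
      exact (Category.id_comp _).symm.trans this
    exact (IsInitial.ofUniqueHom toJ huniq).hasInitial
  exact isRightAdjointOfStructuredArrowInitials U
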